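/- arXiv:2107.10978 — 2 statements merged into one kernel-verified Lean document; each statement's English description precedes it below -/
import Mathlib

section
/- For any real a > 0 and positive integer n, ∑_{k=1}^{n} ψ₀(k+a)²ψ₁(k+a) = (1/6)[−ψ₂(a+n+1) + ψ₂(a+1) + 6(a+n)ψ₀(a+n+1)²ψ₁(a+n+1) − 6aψ₀(a+1)²ψ₁(a+1) − 6(2a+2n+1)ψ₀(a+n+1)ψ₁(a+n+1) + 6(2a+1)ψ₀(a+1)ψ₁(a+1) + 6(2a+2n+1)ψ₁(a+n+1) − 6(2a+1)ψ₁(a+1) + 2ψ₀(a+n+1)³ − 6ψ₀(a+n+1)² + 12ψ₀(a+n+1) − 2ψ₀(a+1)³ + 6ψ₀(a+1)² − 12ψ₀(a+1)]. -/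
open Finset

/-- The `m`-th polygamma function: the `(m+1)`-th derivative of `log ∘ Γ`. -/
noncomputable def psi (m : ℕ) (x : ℝ) : ℝ :=
  iteratedDeriv (m + 1) (fun y => Real.log (Real.Gamma y)) x

open Set Filter Topology

lemma iteratedDerivWithin_of_isOpen' {n : ℕ} {f : ℝ → ℝ} {s : Set ℝ} {x : ℝ}
    (hs : IsOpen s) (hx : x ∈ s) :
    iteratedDerivWithin n f s x = iteratedDeriv n f x := by
  rw [iteratedDerivWithin_eq_iteratedFDerivWithin, iteratedDeriv_eq_iteratedFDeriv,
    iteratedFDerivWithin_of_isOpen n hs hx]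

lemma analyticAt_realGamma {x : ℝ} (hx : 0 < x) : AnalyticAt ℝ Real.Gamma x := by
  have hC : AnalyticAt ℂ Complex.Gamma (x : ℂ) := by
    rw [Complex.analyticAt_iff_eventually_differentiableAt]
    have hre : ∀ᶠ z : ℂ in 𝓝 (x : ℂ), 0 < z.re :=
      (Complex.continuous_re.tendsto _).eventually
        (eventually_gt_nhds (by simpa using hx))
    filter_upwards [hre] with z hz
    refine Complex.differentiableAt_Gamma z fun m h => ?_
    rw [h] at hz
    simp only [Complex.neg_re, Complex.natCast_re] at hz
    linarith [Nat.cast_nonneg (α := ℝ) m]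
  have hC' : AnalyticAt ℝ Complex.Gamma (x : ℂ) := hC.restrictScalars
  have hof : AnalyticAt ℝ (fun t : ℝ => (t : ℂ)) x :=
    Complex.ofRealCLM.analyticAt x
  have h1 : AnalyticAt ℝ (fun t : ℝ => Complex.Gamma (t : ℝ)) x := hC'.comp hof
  have h2 : AnalyticAt ℝ (fun t : ℝ => (Complex.Gamma (t : ℝ)).re) x :=
    (Complex.reCLM.analyticAt _).comp h1
  have : Real.Gamma = fun t : ℝ => (Complex.Gamma (t : ℝ)).re := by
    funext t
    rw [Complex.Gamma_ofReal, Complex.ofReal_re]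
  rw [this]
  exact h2

lemma contDiffOn_logGamma {n : WithTop ℕ∞} :
    ContDiffOn ℝ n (fun y => Real.log (Real.Gamma y)) (Ioi (0:ℝ)) := by
  intro x hx
  have hx' : (0:ℝ) < x := hx
  have hG : ContDiffAt ℝ n Real.Gamma x := (analyticAt_realGamma hx').contDiffAt
  have hL : ContDiffAt ℝ n Real.log (Real.Gamma x) :=
    Real.contDiffAt_log.mpr (Real.Gamma_pos_of_pos hx').ne'
  exact (hL.comp x hG).contDiffWithinAt

lemma contDiffOn_log' {n : WithTop ℕ∞} : ContDiffOn ℝ n Real.log (Ioi (0:ℝ)) := fun x hx =>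
  (Real.contDiffAt_log.mpr (ne_of_gt hx)).contDiffWithinAt

lemma psi_add_one (m : ℕ) {x : ℝ} (hx : 0 < x) :
    psi m (x + 1) = psi m x + iteratedDeriv (m + 1) Real.log x := by
  set F : ℝ → ℝ := fun y => Real.log (Real.Gamma y) with hF
  have h1 : psi m (x + 1) = iteratedDeriv (m + 1) (fun y => F (y + 1)) x := by
    rw [psi, iteratedDeriv_comp_add_const]
  have h2 : (fun y => F (y + 1)) =ᶠ[𝓝 x] (F + Real.log) := by
    filter_upwards [eventually_gt_nhds hx] with y hy
    simp only [hF, Pi.add_apply, Real.Gamma_add_one hy.ne',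
      Real.log_mul hy.ne' (Real.Gamma_pos_of_pos hy).ne']
    ring
  have h3 : iteratedDeriv (m + 1) (F + Real.log) x =
      iteratedDeriv (m + 1) F x + iteratedDeriv (m + 1) Real.log x := by
    have hu : UniqueDiffOn ℝ (Ioi (0:ℝ)) := isOpen_Ioi.uniqueDiffOn
    have hmem : x ∈ Ioi (0:ℝ) := hx
    rw [← iteratedDerivWithin_of_isOpen' (n := m + 1) (f := F + Real.log) isOpen_Ioi hmem,
      iteratedDerivWithin_add hmem hu (contDiffOn_logGamma x hmem) (contDiffOn_log' x hmem),
      iteratedDerivWithin_of_isOpen' isOpen_Ioi hmem,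
      iteratedDerivWithin_of_isOpen' isOpen_Ioi hmem]
  rw [h1, h2.iteratedDeriv_eq, h3, psi]

lemma iteratedDeriv_log_one : iteratedDeriv 1 Real.log = fun x => x⁻¹ := by
  funext x
  rw [iteratedDeriv_one, Real.deriv_log]

lemma iteratedDeriv_log_two : iteratedDeriv 2 Real.log = fun x => -(x ^ 2)⁻¹ := by
  funext x
  rw [iteratedDeriv_succ, iteratedDeriv_log_one, deriv_inv]

lemma iteratedDeriv_log_three : iteratedDeriv 3 Real.log = fun x => 2 * (x ^ 3)⁻¹ := by
  funext x
  rw [iteratedDeriv_succ, iteratedDeriv_log_two]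
  have : (fun x : ℝ => -(x ^ 2)⁻¹) = fun x : ℝ => -(x ^ (-2 : ℤ)) := by
    funext y; rw [zpow_neg]; norm_cast
  rw [this, deriv.fun_neg, deriv_zpow]
  have : x ^ (-2 - 1 : ℤ) = (x ^ 3)⁻¹ := by
    rw [show (-2 - 1 : ℤ) = -3 by norm_num, zpow_neg]; norm_cast
  rw [this]
  push_cast
  ring

lemma psi0_rec {x : ℝ} (hx : 0 < x) : psi 0 (x + 1) = psi 0 x + x⁻¹ := by
  rw [psi_add_one 0 hx, iteratedDeriv_log_one]

lemma psi1_rec {x : ℝ} (hx : 0 < x) : psi 1 (x + 1) = psi 1 x - (x ^ 2)⁻¹ := by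
  rw [psi_add_one 1 hx, iteratedDeriv_log_two]; ring

lemma psi2_rec {x : ℝ} (hx : 0 < x) : psi 2 (x + 1) = psi 2 x + 2 * (x ^ 3)⁻¹ := by
  rw [psi_add_one 2 hx, iteratedDeriv_log_three]

/-- The telescoping antiderivative. -/
noncomputable def Gfun (x : ℝ) : ℝ :=
  (1/6) * (-psi 2 x + 6 * (x - 1) * (psi 0 x)^2 * psi 1 x - 6 * (2*x - 1) * psi 0 x * psi 1 x +
    6 * (2*x - 1) * psi 1 x + 2 * (psi 0 x)^3 - 6 * (psi 0 x)^2 + 12 * psi 0 x)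

lemma Gfun_step {x : ℝ} (hx : 0 < x) :
    Gfun (x + 1) = Gfun x + (psi 0 x)^2 * psi 1 x := by
  unfold Gfun
  rw [psi0_rec hx, psi1_rec hx, psi2_rec hx]
  have hx' : x ≠ 0 := hx.ne'
  field_simp
  ring

theorem stmt_7 (a : ℝ) (ha : 0 < a) (n : ℕ) (hn : 0 < n) :
    ∑ k ∈ Icc 1 n, (psi 0 ((k : ℝ) + a))^2 * psi 1 ((k : ℝ) + a) =
      (1/6) * (-psi 2 (a + n + 1) + psi 2 (a + 1) +
        6 * (a + n) * (psi 0 (a + n + 1))^2 * psi 1 (a + n + 1) - 6 * a * (psi 0 (a + 1))^2 * psi 1 (a + 1) -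
        6 * (2*a + 2*n + 1) * psi 0 (a + n + 1) * psi 1 (a + n + 1) + 6 * (2*a + 1) * psi 0 (a + 1) * psi 1 (a + 1) +
        6 * (2*a + 2*n + 1) * psi 1 (a + n + 1) - 6 * (2*a + 1) * psi 1 (a + 1) +
        2 * (psi 0 (a + n + 1))^3 - 6 * (psi 0 (a + n + 1))^2 + 12 * psi 0 (a + n + 1) -
        2 * (psi 0 (a + 1))^3 + 6 * (psi 0 (a + 1))^2 - 12 * psi 0 (a + 1)) := by
  have main : ∀ m : ℕ, ∑ k ∈ Icc 1 m, (psi 0 ((k : ℝ) + a))^2 * psi 1 ((k : ℝ) + a) =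
      Gfun (a + m + 1) - Gfun (a + 1) := by
    intro m
    induction m with
    | zero => simp
    | succ m ih =>
      rw [Finset.sum_Icc_succ_top (by omega : 1 ≤ m + 1), ih]
      have hpos : (0:ℝ) < (m:ℝ) + 1 + a := by positivity
      have e1 : ((m + 1 : ℕ) : ℝ) + a = (m:ℝ) + 1 + a := by push_cast; ring
      have e2 : a + ((m + 1 : ℕ) : ℝ) + 1 = ((m:ℝ) + 1 + a) + 1 := by push_cast; ring
      have e3 : a + (m:ℝ) + 1 = (m:ℝ) + 1 + a := by ring
      rw [e1, e2, e3, Gfun_step hpos]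
      ring
  rw [main n]
  unfold Gfun
  ring
end

section
/- For positive integers m ≤ n, ∑_{k=1}^{m} (n−k)!/(m−k)! · ψ₀(n+1−k) = n!/((m−1)!(n−m+1)) · [ψ₀(n+1) − 1/(n−m+1)]. -/
open Finset

lemma diff_logGamma {x : ℝ} (hx : 0 < x) :
    DifferentiableAt ℝ (fun y => Real.log (Real.Gamma y)) x := by
  apply DifferentiableAt.log
  · refine Real.differentiableAt_Gamma (fun m => ?_)
    have : (0:ℝ) ≤ m := Nat.cast_nonneg m
    nlinarith
  · exact (Real.Gamma_pos_of_pos hx).ne'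

lemma psi_rec {x : ℝ} (hx : 0 < x) : psi 0 (x + 1) = psi 0 x + 1 / x := by
  have hψ : psi 0 = deriv (fun y => Real.log (Real.Gamma y)) := by
    funext y; simp [psi, iteratedDeriv_one]
  set f := fun y => Real.log (Real.Gamma y) with hf
  have h1 : deriv f (x + 1) = deriv (fun y => f (y + 1)) x := (deriv_comp_add_const f 1 x).symm
  have h2 : (fun y => f (y + 1)) =ᶠ[nhds x] fun y => Real.log y + f y := by
    filter_upwards [eventually_gt_nhds hx] with y hy
    have : Real.Gamma (y + 1) = y * Real.Gamma y := Real.Gamma_add_one hy.ne'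
    simp only [hf, this, Real.log_mul hy.ne' (Real.Gamma_pos_of_pos hy).ne']
  have h3 : deriv (fun y => f (y + 1)) x = deriv (fun y => Real.log y + f y) x := h2.deriv_eq
  have h4 : deriv (fun y => Real.log y + f y) x = 1 / x + deriv f x := by
    rw [deriv_fun_add (Real.differentiableAt_log hx.ne') (diff_logGamma hx), Real.deriv_log, one_div]
  rw [hψ, h1, h3, h4]; ring

lemma key : ∀ m : ℕ, 1 ≤ m → ∀ n : ℕ, m ≤ n →
    ∑ k ∈ Icc 1 m, ((Nat.factorial (n - k) : ℝ) / (Nat.factorial (m - k) : ℝ)) * psi 0 ((n : ℝ) + 1 - k) =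
      (Nat.factorial n : ℝ) / ((Nat.factorial (m - 1) : ℝ) * ((n : ℝ) - m + 1)) * (psi 0 ((n : ℝ) + 1) - 1 / ((n : ℝ) - m + 1)) := by
  refine Nat.le_induction ?_ ?_
  · intro n hn
    have hn' : (0:ℝ) < n := by exact_mod_cast hn
    have hrec := psi_rec hn'
    have hfac : (Nat.factorial n : ℝ) = n * Nat.factorial (n - 1) := by
      exact_mod_cast congrArg (Nat.cast : ℕ → ℝ) (Nat.mul_factorial_pred (Nat.one_le_iff_ne_zero.mp hn)).symm
    simp only [Icc_self, sum_singleton, Nat.sub_self, Nat.factorial_zero, Nat.cast_one]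
    rw [hrec, hfac]
    have hfp : (0:ℝ) < Nat.factorial (n-1) := by exact_mod_cast Nat.factorial_pos _
    field_simp
    rw [sub_add_cancel, div_self hn'.ne', add_sub_cancel_right, add_sub_cancel_right, mul_div_cancel_left₀ _ hn'.ne']
  · intro m hm ih n hn
    have hn1 : 1 ≤ n := le_trans (by omega) hn
    have hmn' : m ≤ n - 1 := by omega
    have ihn := ih (n - 1) hmn'
    have hc : ((n - 1 : ℕ) : ℝ) = (n : ℝ) - 1 := by
      push_cast [Nat.cast_sub hn1]; ring
    -- rewrite LHS sum
    have hsum : ∑ k ∈ Icc 1 (m + 1), ((Nat.factorial (n - k) : ℝ) / (Nat.factorial (m + 1 - k) : ℝ)) * psi 0 ((n : ℝ) + 1 - k)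
        = (Nat.factorial (n - 1) : ℝ) / (Nat.factorial m : ℝ) * psi 0 ((n : ℝ))
          + ∑ k ∈ Icc 1 m, ((Nat.factorial (n - 1 - k) : ℝ) / (Nat.factorial (m - k) : ℝ)) * psi 0 (((n - 1 : ℕ) : ℝ) + 1 - k) := by
      have e1 : Icc 1 (m + 1) = Ico 1 (m + 2) := by rfl
      have e2 : Icc 1 m = Ico 1 (m + 1) := by rfl
      rw [e1, e2, Finset.sum_Ico_eq_sum_range, Finset.sum_Ico_eq_sum_range]
      simp only [show m + 2 - 1 = m + 1 from rfl, show m + 1 - 1 = m from rfl]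
      rw [Finset.sum_range_succ', add_comm]
      congr 1
      · have a1 : n - (1 + 0) = n - 1 := by omega
        have a2 : m + 1 - (1 + 0) = m := by omega
        rw [a1, a2]
        congr 1
        norm_num
      · refine Finset.sum_congr rfl fun i _ => ?_
        have a1 : n - (1 + (i + 1)) = n - 1 - (1 + i) := by omega
        have a2 : m + 1 - (1 + (i + 1)) = m - (1 + i) := by omega
        rw [a1, a2]
        congr 1
        push_cast [hc]
        ring
    rw [hsum, ihn]
    -- now pure algebra
    have hnR : (0:ℝ) < (n:ℝ) := by exact_mod_cast hn1
    have hrec : psi 0 ((n:ℝ) + 1) = psi 0 (n:ℝ) + 1 / n := psi_rec hnR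
    have hfacn : (Nat.factorial n : ℝ) = n * Nat.factorial (n - 1) := by
      exact_mod_cast congrArg (Nat.cast : ℕ → ℝ) (Nat.mul_factorial_pred (Nat.one_le_iff_ne_zero.mp hn1)).symm
    have hfacm : (Nat.factorial m : ℝ) = m * Nat.factorial (m - 1) := by
      exact_mod_cast congrArg (Nat.cast : ℕ → ℝ) (Nat.mul_factorial_pred (Nat.one_le_iff_ne_zero.mp hm)).symm
    have hnm : (0:ℝ) < (n:ℝ) - m := by
      have : (m:ℝ) + 1 ≤ n := by exact_mod_cast hn
      linarith
    have hd1 : ((n - 1 : ℕ) : ℝ) - m + 1 = (n:ℝ) - m := by rw [hc]; ring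
    have hd2 : (n : ℝ) - ((m + 1 : ℕ) : ℝ) + 1 = (n:ℝ) - m := by push_cast; ring
    have hψn1 : psi 0 (((n-1:ℕ):ℝ) + 1) = psi 0 (n:ℝ) := by
      rw [show ((n-1:ℕ):ℝ) + 1 = (n:ℝ) by rw [hc]; ring]
    rw [hd1, hd2, hψn1, hrec, hfacn]
    simp only [show m + 1 - 1 = m from rfl]
    rw [hfacm]
    have hm0 : (0:ℝ) < m := by exact_mod_cast hm
    have hfacm1 : (0:ℝ) < Nat.factorial (m-1) := by exact_mod_cast Nat.factorial_pos _
    field_simp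
    ring_nf

theorem stmt_17 (m n : ℕ) (hm : 0 < m) (hmn : m ≤ n) :
    ∑ k ∈ Icc 1 m, ((Nat.factorial (n - k) : ℝ) / (Nat.factorial (m - k) : ℝ)) * psi 0 ((n : ℝ) + 1 - k) =
      (Nat.factorial n : ℝ) / ((Nat.factorial (m - 1) : ℝ) * ((n : ℝ) - m + 1)) * (psi 0 ((n : ℝ) + 1) - 1 / ((n : ℝ) - m + 1)) := by
  exact key m hm n hmn
end
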